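/- Under Assumption 1 and the small cone assumption, let h > 0 and let X_h be a grid such that every point of X is within Hilbert distance h of some point of X_h. If v ∈ Lip₁(X_h) and λ ∈ ℝ satisfy F̂_h^+ v = λ + v, then the competitive spectral radius ρ of the escape rate game satisfies λ − h ≤ ρ ≤ λ. -/

import Mathlib

open Set Filter

/-- The Funk hemi-metric on a cone `C`. -/
noncomputable def funk {n : ℕ} (C : Set (Fin n → ℝ)) (x y : Fin n → ℝ) : ℝ :=
  Real.log (sInf {l : ℝ | 0 < l ∧ l • y - x ∈ C})

/-- The dual cone of `C`. -/
def dualCone {n : ℕ} (C : Set (Fin n → ℝ)) : Set (Fin n → ℝ) :=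
  {y | ∀ x ∈ C, 0 ≤ dotProduct x y}

/-- The cross-section `X = K ∩ Δ` of the small cone `K`,
where `Δ = {x | ⟨x, e*⟩ = 1}`. -/
def crossSec {n : ℕ} (K : Set (Fin n → ℝ)) (estar : Fin n → ℝ) : Set (Fin n → ℝ) :=
  {x ∈ K | dotProduct x estar = 1}

/-- The operator
`F v (x) = inf_a sup_b [log⟨T_{ab}(x), e*⟩ + v (T_{ab}(x)/⟨T_{ab}(x), e*⟩)]`. -/
noncomputable def Fop {n : ℕ} {E : Type*} (A B : Set E)
    (T : E → E → (Fin n → ℝ) → (Fin n → ℝ)) (estar : Fin n → ℝ)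
    (v : (Fin n → ℝ) → ℝ) (x : Fin n → ℝ) : ℝ :=
  ⨅ a : A, ⨆ b : B, (Real.log (dotProduct (T a b x) estar) +
    v ((dotProduct (T a b x) estar)⁻¹ • T a b x))

/-- The interpolation operator `I_h^+ v (x) = min_{y ∈ X_h} [v(y) + Funk(x,y)]`. -/
noncomputable def Ih {n : ℕ} (C : Set (Fin n → ℝ)) (Xh : Finset (Fin n → ℝ))
    (hne : Xh.Nonempty) (v : (Fin n → ℝ) → ℝ) (x : Fin n → ℝ) : ℝ :=
  Xh.inf' hne (fun y => v y + funk C x y)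

/-- The Shapley operator of the escape rate game:
`S v (x) = inf_{a ∈ 𝒜} sup_{b ∈ ℬ} v (T_{ab}(x))`. -/
noncomputable def shapley {X : Type*} {E : Type*} (A B : Set E)
    (T : E → E → X → X) : (X → ℝ) → X → ℝ :=
  fun v x => ⨅ a : A, ⨆ b : B, v (T a b x)

/-! ### Auxiliary material for the proof of Statement 16. -/

namespace St16

open Pointwise

variable {n : ℕ}

/-- The defining set of the Funk hemi-metric. -/
def fset (C : Set (Fin n → ℝ)) (x y : Fin n → ℝ) : Set ℝ := {l : ℝ | 0 < l ∧ l • y - x ∈ C}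

lemma funk_def (C : Set (Fin n → ℝ)) (x y : Fin n → ℝ) :
    funk C x y = Real.log (sInf (fset C x y)) := rfl

lemma fset_bddBelow (C : Set (Fin n → ℝ)) (x y : Fin n → ℝ) : BddBelow (fset C x y) :=
  ⟨0, fun _ hl => hl.1.le⟩

lemma ball_of_interior {s : Set (Fin n → ℝ)} {y : Fin n → ℝ} (hy : y ∈ interior s) :
    ∃ ε > 0, Metric.ball y ε ⊆ s := by
  rcases Metric.mem_nhds_iff.mp (mem_interior_iff_mem_nhds.mp hy) with ⟨ε, hε, hb⟩
  exact ⟨ε, hε, hb⟩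

lemma mem_fset_of_ball {C : Set (Fin n → ℝ)}
    (hCcone : ∀ x ∈ C, ∀ r : ℝ, 0 ≤ r → r • x ∈ C)
    {y : Fin n → ℝ} {ε : ℝ} (hε : 0 < ε) (hb : Metric.ball y ε ⊆ C)
    (x : Fin n → ℝ) {l : ℝ} (hl : 0 < l) (hxl : ‖x‖ < l * ε) :
    l ∈ fset C x y := by
  have h1 : y - l⁻¹ • x ∈ Metric.ball y ε := by
    rw [Metric.mem_ball, dist_eq_norm]
    have h : y - l⁻¹ • x - y = -(l⁻¹ • x) := by abel
    rw [h, norm_neg, norm_smul, norm_inv, Real.norm_eq_abs, abs_of_pos hl,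
      inv_mul_lt_iff₀ hl]
    linarith
  have h2 := hCcone _ (hb h1) l hl.le
  have h3 : l • (y - l⁻¹ • x) = l • y - x := by
    rw [smul_sub, smul_inv_smul₀ (ne_of_gt hl)]
  rw [h3] at h2
  exact ⟨hl, h2⟩

lemma fset_nonempty {C : Set (Fin n → ℝ)}
    (hCcone : ∀ x ∈ C, ∀ r : ℝ, 0 ≤ r → r • x ∈ C)
    {y : Fin n → ℝ} {ε : ℝ} (hε : 0 < ε) (hb : Metric.ball y ε ⊆ C)
    (x : Fin n → ℝ) : (fset C x y).Nonempty := by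
  refine ⟨‖x‖ / ε + 1, mem_fset_of_ball hCcone hε hb x (by positivity) ?_⟩
  have h : (‖x‖ / ε + 1) * ε = ‖x‖ + ε := by field_simp
  rw [h]; linarith [norm_nonneg x]

lemma fset_pair {C : Set (Fin n → ℝ)} {estar : Fin n → ℝ}
    (hdual : estar ∈ dualCone C) {x y : Fin n → ℝ} {l : ℝ} (hl : l ∈ fset C x y) :
    dotProduct x estar ≤ l * dotProduct y estar := by
  have h := hdual _ hl.2
  rw [sub_dotProduct, smul_dotProduct, smul_eq_mul] at h
  linarith

/-- Main quantitative bounds on the Funk hemi-metric. -/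
lemma funk_bound {C : Set (Fin n → ℝ)} {estar : Fin n → ℝ}
    (hCcone : ∀ x ∈ C, ∀ r : ℝ, 0 ≤ r → r • x ∈ C)
    (hdual : estar ∈ dualCone C)
    {y : Fin n → ℝ} (hdy : 0 < dotProduct y estar)
    {z : Fin n → ℝ} (hdz : 0 < dotProduct z estar)
    {ε : ℝ} (hε : 0 < ε) (hb : Metric.ball y ε ⊆ C)
    {R : ℝ} (hR : ‖z‖ ≤ R) (hR0 : 0 ≤ R) :
    Real.log (dotProduct z estar / dotProduct y estar) ≤ funk C z y ∧
      funk C z y ≤ Real.log (R / ε + 1) := by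
  have hlpos : 0 < R / ε + 1 := by positivity
  have hmem : (R / ε + 1) ∈ fset C z y := by
    apply mem_fset_of_ball hCcone hε hb z hlpos
    have h : (R / ε + 1) * ε = R + ε := by field_simp
    rw [h]; linarith
  have hne : (fset C z y).Nonempty := ⟨_, hmem⟩
  have hlb : dotProduct z estar / dotProduct y estar ≤ sInf (fset C z y) := by
    apply le_csInf hne
    intro l hl
    rw [div_le_iff₀ hdy]
    exact fset_pair hdual hl
  have hq : 0 < dotProduct z estar / dotProduct y estar := by positivity
  exact ⟨Real.log_le_log hq hlb,
    Real.log_le_log (hq.trans_le hlb) (csInf_le (fset_bddBelow C z y) hmem)⟩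

lemma sInf_fset_pos {C : Set (Fin n → ℝ)} {estar : Fin n → ℝ}
    (hdual : estar ∈ dualCone C)
    {x y : Fin n → ℝ} (hdx : 0 < dotProduct x estar)
    (hdy : 0 < dotProduct y estar) (hne : (fset C x y).Nonempty) :
    0 < sInf (fset C x y) := by
  have hlb : dotProduct x estar / dotProduct y estar ≤ sInf (fset C x y) := by
    apply le_csInf hne
    intro l hl
    rw [div_le_iff₀ hdy]
    exact fset_pair hdual hl
  have h : 0 < dotProduct x estar / dotProduct y estar := by positivity
  linarith

/-- Triangle inequality for the Funk hemi-metric. -/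
lemma funk_triangle {C : Set (Fin n → ℝ)} {estar : Fin n → ℝ}
    (hCcone : ∀ x ∈ C, ∀ r : ℝ, 0 ≤ r → r • x ∈ C)
    (hCadd : ∀ u ∈ C, ∀ w ∈ C, u + w ∈ C)
    (hdual : estar ∈ dualCone C)
    {x y z : Fin n → ℝ}
    (hdx : 0 < dotProduct x estar) (hdy : 0 < dotProduct y estar)
    (hdz : 0 < dotProduct z estar)
    (hnexy : (fset C x y).Nonempty) (hneyz : (fset C y z).Nonempty) :
    funk C x z ≤ funk C x y + funk C y z := by
  have hmul : ∀ l ∈ fset C x y, ∀ l' ∈ fset C y z, l * l' ∈ fset C x z := by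
    rintro l ⟨hl, hlm⟩ l' ⟨hl', hlm'⟩
    refine ⟨mul_pos hl hl', ?_⟩
    have h : (l * l') • z - x = l • (l' • z - y) + (l • y - x) := by
      rw [smul_sub, smul_smul]; abel
    rw [h]
    exact hCadd _ (hCcone _ hlm' l hl.le) _ hlm
  have hxy := sInf_fset_pos hdual hdx hdy hnexy
  have hyz := sInf_fset_pos hdual hdy hdz hneyz
  have hnexz : (fset C x z).Nonempty := by
    obtain ⟨l, hl⟩ := hnexy; obtain ⟨l', hl'⟩ := hneyz
    exact ⟨l * l', hmul l hl l' hl'⟩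
  have hxz := sInf_fset_pos hdual hdx hdz hnexz
  have key : sInf (fset C x z) ≤ sInf (fset C x y) * sInf (fset C y z) := by
    have step1 : ∀ l' ∈ fset C y z, sInf (fset C x z) ≤ sInf (fset C x y) * l' := by
      intro l' hl'
      have h2 : sInf (fset C x z) / l' ≤ sInf (fset C x y) := by
        apply le_csInf hnexy
        intro l hl
        rw [div_le_iff₀ hl'.1]
        exact csInf_le (fset_bddBelow C x z) (hmul l hl l' hl')
      calc sInf (fset C x z) = sInf (fset C x z) / l' * l' :=
            (div_mul_cancel₀ _ (ne_of_gt hl'.1)).symm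
        _ ≤ sInf (fset C x y) * l' := mul_le_mul_of_nonneg_right h2 hl'.1.le
    have h3 : sInf (fset C x z) / sInf (fset C x y) ≤ sInf (fset C y z) := by
      apply le_csInf hneyz
      intro l' hl'
      rw [div_le_iff₀ hxy]
      calc sInf (fset C x z) ≤ sInf (fset C x y) * l' := step1 l' hl'
        _ = l' * sInf (fset C x y) := mul_comm _ _
    calc sInf (fset C x z) = sInf (fset C x z) / sInf (fset C x y) * sInf (fset C x y) :=
          (div_mul_cancel₀ _ (ne_of_gt hxy)).symm
      _ ≤ sInf (fset C y z) * sInf (fset C x y) := mul_le_mul_of_nonneg_right h3 hxy.le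
      _ = sInf (fset C x y) * sInf (fset C y z) := mul_comm _ _
  rw [funk_def, funk_def, funk_def, ← Real.log_mul (ne_of_gt hxy) (ne_of_gt hyz)]
  exact Real.log_le_log hxz key

/-- Scaling of the Funk hemi-metric in the first argument. -/
lemma funk_smul {C : Set (Fin n → ℝ)} {estar : Fin n → ℝ}
    (hCcone : ∀ x ∈ C, ∀ r : ℝ, 0 ≤ r → r • x ∈ C)
    (hdual : estar ∈ dualCone C)
    {x y : Fin n → ℝ}
    (hdx : 0 < dotProduct x estar) (hdy : 0 < dotProduct y estar)
    (hne : (fset C x y).Nonempty) {c : ℝ} (hc : 0 < c) :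
    funk C (c • x) y = Real.log c + funk C x y := by
  have hseteq : fset C (c • x) y = c • fset C x y := by
    ext l
    constructor
    · rintro ⟨hl, hlm⟩
      refine Set.mem_smul_set.2 ⟨l / c, ⟨by positivity, ?_⟩, by rw [smul_eq_mul]; field_simp⟩
      have h : (l / c) • y - x = c⁻¹ • (l • y - c • x) := by
        rw [smul_sub, smul_smul, inv_smul_smul₀ (ne_of_gt hc)]
        congr 1
        rw [div_eq_inv_mul]
      rw [h]
      exact hCcone _ hlm c⁻¹ (by positivity)
    · rw [Set.mem_smul_set]
      rintro ⟨t, ⟨ht, htm⟩, rfl⟩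
      refine ⟨by positivity, ?_⟩
      have h : (c • t) • y - c • x = c • (t • y - x) := by
        rw [smul_sub, smul_smul, smul_eq_mul]
      rw [h]
      exact hCcone _ htm c hc.le
  have hpos : 0 < sInf (fset C x y) := sInf_fset_pos hdual hdx hdy hne
  rw [funk_def, funk_def, hseteq, Real.sInf_smul_of_nonneg hc.le, smul_eq_mul,
    Real.log_mul (ne_of_gt hc) (ne_of_gt hpos)]

/-- `funk x x = 0` for suitable points. -/
lemma funk_self {C : Set (Fin n → ℝ)} {estar : Fin n → ℝ}
    (hCcone : ∀ x ∈ C, ∀ r : ℝ, 0 ≤ r → r • x ∈ C)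
    (hdual : estar ∈ dualCone C)
    {x : Fin n → ℝ} (hxC : x ∈ C) (hdx : 0 < dotProduct x estar) :
    funk C x x = 0 := by
  have hmem : (1 : ℝ) ∈ fset C x x := by
    refine ⟨one_pos, ?_⟩
    have h : (1 : ℝ) • x - x = (0 : ℝ) • x := by simp
    rw [h]
    exact hCcone _ hxC 0 le_rfl
  have h1 : sInf (fset C x x) = 1 := by
    apply le_antisymm (csInf_le (fset_bddBelow C x x) hmem)
    apply le_csInf ⟨1, hmem⟩
    intro l hl
    have := fset_pair hdual hl
    nlinarith
  rw [funk_def, h1, Real.log_one]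

/-- Positive scalings preserve the interior of a cone. -/
lemma smul_mem_interior {C : Set (Fin n → ℝ)}
    (hCcone : ∀ x ∈ C, ∀ r : ℝ, 0 ≤ r → r • x ∈ C)
    {u : Fin n → ℝ} (hu : u ∈ interior C) {c : ℝ} (hc : 0 < c) :
    c • u ∈ interior C := by
  obtain ⟨ε, hε, hb⟩ := ball_of_interior hu
  rw [mem_interior_iff_mem_nhds, Metric.mem_nhds_iff]
  refine ⟨c * ε, by positivity, fun w hw => ?_⟩
  have h1 : c⁻¹ • w ∈ Metric.ball u ε := by
    rw [Metric.mem_ball, dist_eq_norm] at hw ⊢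
    have h : c⁻¹ • w - u = c⁻¹ • (w - c • u) := by
      rw [smul_sub, inv_smul_smul₀ (ne_of_gt hc)]
    rw [h, norm_smul, norm_inv, Real.norm_eq_abs, abs_of_pos hc]
    calc c⁻¹ * ‖w - c • u‖ < c⁻¹ * (c * ε) := by
          apply mul_lt_mul_of_pos_left hw (by positivity)
      _ = ε := by field_simp
  have h2 := hCcone _ (hb h1) c hc.le
  rwa [smul_inv_smul₀ (ne_of_gt hc)] at h2

lemma inf'_const_add (s : Finset (Fin n → ℝ)) (hne : s.Nonempty)
    (f : (Fin n → ℝ) → ℝ) (c : ℝ) :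
    s.inf' hne (fun y => c + f y) = c + s.inf' hne f := by
  apply le_antisymm
  · obtain ⟨y, hy, hEq⟩ := s.exists_mem_eq_inf' hne f
    rw [hEq]
    exact Finset.inf'_le _ hy
  · exact Finset.le_inf' _ _ fun y hy => add_le_add_right (Finset.inf'_le f hy) c

lemma csupr_const_add {ι : Sort*} [Nonempty ι] (f : ι → ℝ) (c : ℝ)
    (h : BddAbove (Set.range f)) : (⨆ i, (c + f i)) = c + ⨆ i, f i := by
  have h2 : BddAbove (Set.range fun i => c + f i) := by
    obtain ⟨M, hM⟩ := h
    refine ⟨c + M, ?_⟩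
    rintro _ ⟨i, rfl⟩
    exact add_le_add_right (hM ⟨i, rfl⟩) c
  apply le_antisymm
  · exact ciSup_le fun i => add_le_add_right (le_ciSup h i) c
  · rw [add_comm, ← le_sub_iff_add_le]
    apply ciSup_le fun i => ?_
    rw [le_sub_iff_add_le, add_comm]
    exact le_ciSup h2 i

lemma cinf_const_add {ι : Sort*} [Nonempty ι] (f : ι → ℝ) (c : ℝ)
    (h : BddBelow (Set.range f)) : (⨅ i, (c + f i)) = c + ⨅ i, f i := by
  have h2 : BddBelow (Set.range fun i => c + f i) := by
    obtain ⟨M, hM⟩ := h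
    refine ⟨c + M, ?_⟩
    rintro _ ⟨i, rfl⟩
    exact add_le_add_right (hM ⟨i, rfl⟩) c
  apply le_antisymm
  · have h3 : (⨅ i, c + f i) - c ≤ ⨅ i, f i :=
      le_ciInf fun i => by linarith [ciInf_le h2 i]
    linarith
  · exact le_ciInf fun i => add_le_add_right (ciInf_le h i) c

/-- Boundedness on compact subsets of the interior. -/
def Pbdd (C : Set (Fin n → ℝ)) (g : (Fin n → ℝ) → ℝ) : Prop :=
  ∀ Kc : Set (Fin n → ℝ), Kc ⊆ interior C → IsCompact Kc →
    ∃ m M : ℝ, ∀ z ∈ Kc, m ≤ g z ∧ g z ≤ M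

lemma dot_continuous (estar : Fin n → ℝ) :
    Continuous (fun z : Fin n → ℝ => dotProduct z estar) := by
  unfold dotProduct
  exact continuous_finset_sum _ fun i _ => (continuous_apply i).mul continuous_const

lemma Pbdd_funk {C : Set (Fin n → ℝ)} {estar : Fin n → ℝ}
    (hCcone : ∀ x ∈ C, ∀ r : ℝ, 0 ≤ r → r • x ∈ C)
    (hdual : estar ∈ dualCone C)
    (hdpos : ∀ z ∈ interior C, 0 < dotProduct z estar)
    {y : Fin n → ℝ} (hy : y ∈ interior C) :
    Pbdd C (fun z => funk C z y) := by
  intro Kc hsub hcpt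
  rcases Kc.eq_empty_or_nonempty with rfl | hne
  · exact ⟨0, 0, fun z hz => absurd hz (Set.notMem_empty z)⟩
  obtain ⟨ε, hε, hb⟩ := ball_of_interior hy
  obtain ⟨R0, hR0⟩ : ∃ R, ∀ z ∈ Kc, ‖z‖ ≤ R := by
    obtain ⟨R, hR⟩ := hcpt.isBounded.subset_closedBall 0
    exact ⟨R, fun z hz => by simpa using hR hz⟩
  obtain ⟨zs, hzs, hmin⟩ : ∃ z ∈ Kc, ∀ w ∈ Kc,
      dotProduct z estar ≤ dotProduct w estar :=
    hcpt.exists_isMinOn hne ((dot_continuous estar).continuousOn)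
  have hp : 0 < dotProduct zs estar := hdpos _ (hsub hzs)
  have hdy := hdpos _ hy
  refine ⟨Real.log (dotProduct zs estar / dotProduct y estar),
    Real.log (max R0 0 / ε + 1), fun z hz => ?_⟩
  have hbd := funk_bound hCcone hdual hdy (hdpos _ (hsub hz)) hε hb
    ((hR0 z hz).trans (le_max_left _ _)) (le_max_right _ _)
  have hmono : dotProduct zs estar / dotProduct y estar ≤
      dotProduct z estar / dotProduct y estar := by
    gcongr
    exact hmin z hz
  exact ⟨le_trans (Real.log_le_log (by positivity) hmono) hbd.1, hbd.2⟩

section Sop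
variable {E : Type*} (A B : Set E) (T : E → E → (Fin n → ℝ) → (Fin n → ℝ))
  [Nonempty ↥A] [Nonempty ↥B]

lemma S_bounds {g : (Fin n → ℝ) → ℝ} {z : Fin n → ℝ} {m M : ℝ}
    (hb : ∀ a ∈ A, ∀ b ∈ B, m ≤ g (T a b z) ∧ g (T a b z) ≤ M) :
    m ≤ shapley A B T g z ∧ shapley A B T g z ≤ M := by
  have hBA : ∀ a : A, BddAbove (Set.range fun b : B => g (T a b z)) := fun a =>
    ⟨M, by rintro _ ⟨b, rfl⟩; exact (hb a a.2 b b.2).2⟩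
  have hsup_le : ∀ a : A, (⨆ b : B, g (T a b z)) ≤ M := fun a =>
    ciSup_le fun b => (hb a a.2 b b.2).2
  have hle_sup : ∀ a : A, m ≤ ⨆ b : B, g (T a b z) := fun a => by
    obtain b₀ := Classical.arbitrary ↥B
    exact (hb a a.2 b₀ b₀.2).1.trans (le_ciSup (hBA a) b₀)
  constructor
  · exact le_ciInf hle_sup
  · obtain a₀ := Classical.arbitrary ↥A
    exact (ciInf_le ⟨m, by rintro _ ⟨a, rfl⟩; exact hle_sup a⟩ a₀).trans (hsup_le a₀)

lemma S_mono {g1 g2 : (Fin n → ℝ) → ℝ} {z : Fin n → ℝ} {m M : ℝ}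
    (hb1 : ∀ a ∈ A, ∀ b ∈ B, m ≤ g1 (T a b z))
    (hb2 : ∀ a ∈ A, ∀ b ∈ B, g2 (T a b z) ≤ M)
    (hle : ∀ a ∈ A, ∀ b ∈ B, g1 (T a b z) ≤ g2 (T a b z)) :
    shapley A B T g1 z ≤ shapley A B T g2 z := by
  have hBA2 : ∀ a : A, BddAbove (Set.range fun b : B => g2 (T a b z)) := fun a =>
    ⟨M, by rintro _ ⟨b, rfl⟩; exact hb2 a a.2 b b.2⟩
  have hsup : ∀ a : A, (⨆ b : B, g1 (T a b z)) ≤ ⨆ b : B, g2 (T a b z) := fun a =>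
    ciSup_le fun b => (hle a a.2 b b.2).trans (le_ciSup (hBA2 a) b)
  have hbdd1 : BddBelow (Set.range fun a : A => ⨆ b : B, g1 (T a b z)) := by
    refine ⟨m, ?_⟩
    rintro _ ⟨a, rfl⟩
    obtain b₀ := Classical.arbitrary ↥B
    have hBA1 : BddAbove (Set.range fun b : B => g1 (T a b z)) := by
      refine ⟨M, ?_⟩
      rintro _ ⟨b, rfl⟩
      exact (hle a a.2 b b.2).trans (hb2 a a.2 b b.2)
    exact (hb1 a a.2 b₀ b₀.2).trans (le_ciSup hBA1 b₀)
  exact le_ciInf fun a => (ciInf_le hbdd1 a).trans (hsup a)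

lemma S_const_add {g : (Fin n → ℝ) → ℝ} {z : Fin n → ℝ} {m M : ℝ} (c : ℝ)
    (hb : ∀ a ∈ A, ∀ b ∈ B, m ≤ g (T a b z) ∧ g (T a b z) ≤ M) :
    shapley A B T (fun u => c + g u) z = c + shapley A B T g z := by
  have hBA : ∀ a : A, BddAbove (Set.range fun b : B => g (T a b z)) := fun a =>
    ⟨M, by rintro _ ⟨b, rfl⟩; exact (hb a a.2 b b.2).2⟩
  have h1 : ∀ a : A, (⨆ b : B, (fun u => c + g u) (T a b z)) = c + ⨆ b : B, g (T a b z) :=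
    fun a => csupr_const_add _ c (hBA a)
  show (⨅ a : A, ⨆ b : B, (fun u => c + g u) (T a b z)) = _
  rw [iInf_congr h1]
  apply cinf_const_add
  refine ⟨m, ?_⟩
  rintro _ ⟨a, rfl⟩
  obtain b₀ := Classical.arbitrary ↥B
  exact (hb a a.2 b₀ b₀.2).1.trans (le_ciSup (hBA a) b₀)

lemma S_lip {C : Set (Fin n → ℝ)}
    (hTmaps : ∀ a ∈ A, ∀ b ∈ B, ∀ x ∈ interior C, T a b x ∈ interior C)
    (hTnexp : ∀ a ∈ A, ∀ b ∈ B, ∀ x ∈ interior C, ∀ y ∈ interior C,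
      funk C (T a b x) (T a b y) ≤ funk C x y)
    {g : (Fin n → ℝ) → ℝ}
    (hg : ∀ u ∈ interior C, ∀ u' ∈ interior C, g u ≤ g u' + funk C u u')
    {z z' : Fin n → ℝ} (hz : z ∈ interior C) (hz' : z' ∈ interior C)
    {m0 m M : ℝ}
    (hbz : ∀ a ∈ A, ∀ b ∈ B, m0 ≤ g (T a b z))
    (hbz' : ∀ a ∈ A, ∀ b ∈ B, m ≤ g (T a b z') ∧ g (T a b z') ≤ M) :
    shapley A B T g z ≤ shapley A B T g z' + funk C z z' := by
  have key : ∀ a : A, ∀ b : B, g (T a b z) ≤ g (T a b z') + funk C z z' := fun a b => by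
    have h1 := hg _ (hTmaps a a.2 b b.2 z hz) _ (hTmaps a a.2 b b.2 z' hz')
    have h2 := hTnexp a a.2 b b.2 z hz z' hz'
    linarith
  have hBA' : ∀ a : A, BddAbove (Set.range fun b : B => g (T a b z')) := fun a =>
    ⟨M, by rintro _ ⟨b, rfl⟩; exact (hbz' _ a.2 _ b.2).2⟩
  have hsup : ∀ a : A, (⨆ b : B, g (T a b z)) ≤ (⨆ b : B, g (T a b z')) + funk C z z' :=
    fun a => ciSup_le fun b => (key a b).trans (add_le_add_left (le_ciSup (hBA' a) b) _)
  have hbdd : BddBelow (Set.range fun a : A => ⨆ b : B, g (T a b z)) := by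
    refine ⟨m0, ?_⟩
    rintro _ ⟨a, rfl⟩
    obtain b₀ := Classical.arbitrary ↥B
    have hBA : BddAbove (Set.range fun b : B => g (T a b z)) :=
      ⟨M + funk C z z', by
        rintro _ ⟨b, rfl⟩
        exact (key a b).trans (add_le_add_left (hbz' _ a.2 _ b.2).2 _)⟩
    exact (hbz _ a.2 _ b₀.2).trans (le_ciSup hBA b₀)
  have h4 : ∀ a : A, shapley A B T g z ≤ (⨆ b : B, g (T a b z')) + funk C z z' :=
    fun a => (ciInf_le hbdd a).trans (hsup a)
  have h5 : shapley A B T g z - funk C z z' ≤ shapley A B T g z' :=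
    le_ciInf fun a => by linarith [h4 a]
  linarith

lemma Pbdd_shapley {C : Set (Fin n → ℝ)}
    (hTmaps : ∀ a ∈ A, ∀ b ∈ B, ∀ x ∈ interior C, T a b x ∈ interior C)
    (hcomp : ∀ Kc : Set (Fin n → ℝ), Kc ⊆ interior C → IsCompact Kc →
      IsCompact {z | ∃ a ∈ A, ∃ b ∈ B, ∃ x ∈ Kc, z = T a b x})
    {g : (Fin n → ℝ) → ℝ} (hP : Pbdd C g) : Pbdd C (shapley A B T g) := by
  intro Kc hsub hcpt
  have hImgC : IsCompact {z | ∃ a ∈ A, ∃ b ∈ B, ∃ x ∈ Kc, z = T a b x} := hcomp Kc hsub hcpt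
  have hImgSub : {z | ∃ a ∈ A, ∃ b ∈ B, ∃ x ∈ Kc, z = T a b x} ⊆ interior C := by
    rintro w ⟨a, ha, b, hb, x, hx, rfl⟩
    exact hTmaps a ha b hb x (hsub hx)
  obtain ⟨m, M, hmM⟩ := hP _ hImgSub hImgC
  exact ⟨m, M, fun z hz => S_bounds A B T (fun a ha b hb => hmM _ ⟨a, ha, b, hb, z, hz, rfl⟩)⟩

end Sop

end St16

open St16

/-- an additive eigenpair `(v, λ)` of the discretized operator `F̂_h^+`
on a grid of mesh `h` yields the two-sided bound `λ - h ≤ ρ ≤ λ` on the competitive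
spectral radius. -/
theorem stmt_16
    {n : ℕ} (C : Set (Fin n → ℝ))
    (hCclosed : IsClosed C) (hCconv : Convex ℝ C)
    (hCcone : ∀ x ∈ C, ∀ r : ℝ, 0 ≤ r → r • x ∈ C)
    (hCpointed : ∀ x ∈ C, -x ∈ C → x = 0)
    (estar : Fin n → ℝ) (hestar : estar ∈ interior (dualCone C))
    {E : Type*} [MetricSpace E]
    (A B : Set E) (hAc : IsCompact A) (hAne : A.Nonempty)
    (hBc : IsCompact B) (hBne : B.Nonempty)
    (T : E → E → (Fin n → ℝ) → (Fin n → ℝ))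
    (hTmaps : ∀ a ∈ A, ∀ b ∈ B, ∀ x ∈ interior C, T a b x ∈ interior C)
    (hTnexp : ∀ a ∈ A, ∀ b ∈ B, ∀ x ∈ interior C, ∀ y ∈ interior C,
      funk C (T a b x) (T a b y) ≤ funk C x y)
    (hconta : ∀ x ∈ interior C, ∀ b ∈ B, ContinuousOn (fun a => T a b x) A)
    (hcontb : ∀ x ∈ interior C, ∀ a ∈ A, ContinuousOn (fun b => T a b x) B)
    (hcomp : ∀ Kc : Set (Fin n → ℝ), Kc ⊆ interior C → IsCompact Kc →
      IsCompact {z | ∃ a ∈ A, ∃ b ∈ B, ∃ x ∈ Kc, z = T a b x})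
    (K : Set (Fin n → ℝ)) (hKclosed : IsClosed K)
    (hKcone : ∀ x ∈ K, ∀ r : ℝ, 0 ≤ r → r • x ∈ K) (hKC : K ⊆ C)
    (hTK : ∀ a ∈ A, ∀ b ∈ B, ∀ x ∈ K, T a b x ∈ K)
    (hXsub : crossSec K estar ⊆ interior C)
    (hXne : (crossSec K estar).Nonempty)
    (hThom : ∀ a ∈ A, ∀ b ∈ B, ∀ x ∈ interior C, ∀ c : ℝ, 0 < c →
      T a b (c • x) = c • T a b x)
    (hTC : ∀ a ∈ A, ∀ b ∈ B, ∀ x ∈ C, T a b x ∈ C)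
    (hText : ∀ a ∈ A, ∀ b ∈ B, ContinuousOn (T a b) C)
    (xb : Fin n → ℝ) (hxb : xb ∈ interior C) (ρ : ℝ)
    (hρ : Tendsto (fun k : ℕ =>
        (shapley A B T)^[k] (fun y => funk C y xb) xb / (k : ℝ))
      atTop (nhds ρ))
    (h : ℝ) (hh : 0 < h)
    (Xh : Finset (Fin n → ℝ)) (hXhne : Xh.Nonempty)
    (hXhsub : ↑Xh ⊆ crossSec K estar)
    (hcover : ∀ x ∈ crossSec K estar, ∃ y ∈ Xh, funk C x y + funk C y x < h)
    (v : (Fin n → ℝ) → ℝ) (l : ℝ)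
    (hvLip : ∀ x ∈ Xh, ∀ y ∈ Xh, v x - v y ≤ funk C x y)
    (heig : ∀ x ∈ Xh, Fop A B T estar (Ih C Xh hXhne v) x = l + v x) :
    l - h ≤ ρ ∧ ρ ≤ l := by
  classical
  haveI : Nonempty ↥A := hAne.to_subtype
  haveI : Nonempty ↥B := hBne.to_subtype
  have hdual : estar ∈ dualCone C := interior_subset hestar
  have hCadd : ∀ u ∈ C, ∀ w ∈ C, u + w ∈ C := by
    intro u hu w hw
    have hmid := hCconv hu hw (by norm_num : (0:ℝ) ≤ 1/2) (by norm_num : (0:ℝ) ≤ 1/2)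
      (by norm_num)
    have h2 := hCcone _ hmid 2 (by norm_num)
    have heq : (2:ℝ) • ((1/2 : ℝ) • u + (1/2 : ℝ) • w) = u + w := by
      rw [smul_add, smul_smul, smul_smul]
      norm_num
    rwa [heq] at h2
  obtain ⟨x0, hx0X⟩ := hXne
  have hx0K : x0 ∈ K := hx0X.1
  have hx0d : dotProduct x0 estar = 1 := hx0X.2
  have hx0i : x0 ∈ interior C := hXsub hx0X
  have hx0ne : x0 ≠ 0 := by
    intro hzz
    rw [hzz, zero_dotProduct] at hx0d
    norm_num at hx0d
  -- positivity of the pairing with `estar` on the interior of `C`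
  have hdpos : ∀ z ∈ interior C, 0 < dotProduct z estar := by
    intro z hz
    by_cases hz0 : z = 0
    · exfalso
      obtain ⟨ε, hε, hb⟩ := ball_of_interior hz
      subst hz0
      have hx0n : 0 < ‖x0‖ := norm_pos_iff.2 hx0ne
      set w : Fin n → ℝ := (ε / (2 * ‖x0‖)) • x0 with hw
      have hwne : w ≠ 0 := smul_ne_zero (by positivity) hx0ne
      have hwnorm : ‖w‖ < ε := by
        rw [hw, norm_smul, Real.norm_eq_abs, abs_of_pos (by positivity)]
        have heq : ε / (2 * ‖x0‖) * ‖x0‖ = ε / 2 := by field_simp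
        rw [heq]
        linarith
      have hwC : w ∈ C := hb (by rwa [Metric.mem_ball, dist_zero_right])
      have hwC' : -w ∈ C := hb (by rwa [Metric.mem_ball, dist_zero_right, norm_neg])
      exact hwne (hCpointed w hwC hwC')
    · obtain ⟨δ, hδ, hbd⟩ := ball_of_interior hestar
      have hzn : 0 < ‖z‖ := norm_pos_iff.2 hz0
      set c : ℝ := δ / (2 * ‖z‖) with hc
      have hcpos : 0 < c := by positivity
      have he' : estar - c • z ∈ dualCone C := by
        apply hbd
        rw [Metric.mem_ball, dist_eq_norm]
        have h1 : estar - c • z - estar = -(c • z) := by abel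
        rw [h1, norm_neg, norm_smul, Real.norm_eq_abs, abs_of_pos hcpos, hc]
        have heq : δ / (2 * ‖z‖) * ‖z‖ = δ / 2 := by field_simp
        rw [heq]
        linarith
      have h0 := he' z (interior_subset hz)
      rw [dotProduct_sub, dotProduct_smul, smul_eq_mul] at h0
      have hzz : 0 < dotProduct z z := by
        obtain ⟨i, hi⟩ := Function.ne_iff.mp hz0
        have hzi : (0:ℝ) < z i * z i := by
          rcases lt_or_gt_of_ne (show z i ≠ 0 by simpa using hi) with h1 | h1
          · nlinarith
          · nlinarith
        exact Finset.sum_pos' (fun j _ => mul_self_nonneg (z j))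
          ⟨i, Finset.mem_univ i, hzi⟩
      nlinarith
  -- facts about the grid
  have hgrid : ∀ y ∈ Xh, y ∈ interior C ∧ dotProduct y estar = 1 := by
    intro y hy
    have hyX : y ∈ crossSec K estar := hXhsub hy
    exact ⟨hXsub hyX, hyX.2⟩
  -- a uniform norm bound on the cross-section
  obtain ⟨RX, hRX0, hRXb⟩ : ∃ RX : ℝ, 0 ≤ RX ∧ ∀ x ∈ crossSec K estar, ‖x‖ ≤ RX := by
    obtain ⟨δ, hδ, hbd⟩ := ball_of_interior hestar
    refine ⟨2/δ, by positivity, fun x hx => ?_⟩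
    have hxC : x ∈ C := hKC hx.1
    have hco : ∀ i, |x i| ≤ 2/δ := by
      intro i
      have key : ∀ t : ℝ, |t| = 1 → 0 - 1 ≤ (δ/2 * t) * x i := by
        intro t ht
        have hu : estar + (δ/2 * t) • (Pi.single i 1 : Fin n → ℝ) ∈ dualCone C := by
          apply hbd
          rw [Metric.mem_ball, dist_eq_norm]
          have h1 : estar + (δ/2 * t) • (Pi.single i 1 : Fin n → ℝ) - estar
              = (δ/2 * t) • (Pi.single i 1 : Fin n → ℝ) := by abel
          rw [h1, norm_smul, Real.norm_eq_abs, abs_mul, ht, Pi.norm_single]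
          simp only [norm_one, mul_one]
          rw [abs_of_pos (by positivity : (0:ℝ) < δ/2)]
          linarith
        have h2 := hu x hxC
        rw [dotProduct_add, dotProduct_smul, smul_eq_mul,
          dotProduct_single, mul_one, hx.2] at h2
        linarith
      have h1 := key 1 (by norm_num)
      have h2 := key (-1) (by norm_num)
      rw [abs_le]
      constructor
      · have e2 : -2 ≤ δ * x i := by linarith
        rw [neg_le, le_div_iff₀ hδ]
        linarith
      · have e1 : δ * x i ≤ 2 := by linarith
        rw [le_div_iff₀ hδ]
        linarith
    have : ‖x‖ ≤ 2/δ := by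
      apply pi_norm_le_iff_of_nonneg (by positivity) |>.2
      intro i
      rw [Real.norm_eq_abs]
      exact hco i
    exact this
  -- pointwise image bounds from compact boundedness
  have hsingle : ∀ g : (Fin n → ℝ) → ℝ, Pbdd C g → ∀ z ∈ interior C,
      ∃ m M : ℝ, ∀ a ∈ A, ∀ b ∈ B, m ≤ g (T a b z) ∧ g (T a b z) ≤ M := by
    intro g hP z hz
    have hcpt := hcomp {z} (Set.singleton_subset_iff.2 hz) isCompact_singleton
    have hsub : {w | ∃ a ∈ A, ∃ b ∈ B, ∃ x ∈ ({z} : Set (Fin n → ℝ)), w = T a b x}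
        ⊆ interior C := by
      rintro w ⟨a, ha, b, hb, x, hx, rfl⟩
      rw [Set.mem_singleton_iff] at hx
      rw [hx]
      exact hTmaps a ha b hb z hz
    obtain ⟨m, M, hmM⟩ := hP _ hsub hcpt
    exact ⟨m, M, fun a ha b hb => hmM _ ⟨a, ha, b, hb, z, rfl, rfl⟩⟩
  -- the interpolated eigenvector, extended to the interior of the cone
  set W : (Fin n → ℝ) → ℝ := fun z => Xh.inf' hXhne (fun y => v y + funk C z y) with hWdef
  -- `W` is bounded on compact subsets of the interior
  have hPW : Pbdd C W := by
    intro Kc hsub hcpt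
    rcases Kc.eq_empty_or_nonempty with rfl | hne
    · exact ⟨0, 0, fun z hz => absurd hz (Set.notMem_empty z)⟩
    have hXhne' := hXhne
    obtain ⟨y₀, hy₀⟩ := hXhne'
    obtain ⟨ε₀, hε₀, hb₀⟩ := ball_of_interior (hgrid y₀ hy₀).1
    obtain ⟨R0, hR0⟩ : ∃ R, ∀ z ∈ Kc, ‖z‖ ≤ R := by
      obtain ⟨R, hR⟩ := hcpt.isBounded.subset_closedBall 0
      exact ⟨R, fun z hz => by simpa using hR hz⟩
    obtain ⟨zs, hzs, hmin⟩ : ∃ z ∈ Kc, ∀ w ∈ Kc,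
        dotProduct z estar ≤ dotProduct w estar :=
      hcpt.exists_isMinOn hne ((dot_continuous estar).continuousOn)
    have hp : 0 < dotProduct zs estar := hdpos _ (hsub hzs)
    refine ⟨Xh.inf' hXhne v + min (Real.log (dotProduct zs estar)) 0,
      v y₀ + Real.log (max R0 0 / ε₀ + 1), fun z hz => ?_⟩
    have hdz := hdpos _ (hsub hz)
    constructor
    · apply Finset.le_inf'
      intro y hy
      obtain ⟨ε, hε, hb⟩ := ball_of_interior (hgrid y hy).1
      have hbd := (funk_bound hCcone hdual (by rw [(hgrid y hy).2]; exact one_pos) hdz hε hb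
        ((hR0 z hz).trans (le_max_left _ _)) (le_max_right _ _)).1
      rw [(hgrid y hy).2, div_one] at hbd
      have h1 : Xh.inf' hXhne v ≤ v y := Finset.inf'_le v hy
      have h2 : min (Real.log (dotProduct zs estar)) 0 ≤
          Real.log (dotProduct z estar) := by
        rcases le_or_gt 1 (dotProduct z estar) with hc | hc
        · exact (min_le_right _ _).trans (Real.log_nonneg hc)
        · exact (min_le_left _ _).trans (Real.log_le_log hp (hmin z hz))
      linarith
    · have h1 : W z ≤ v y₀ + funk C z y₀ := Finset.inf'_le _ hy₀
      have hbd := (funk_bound hCcone hdual (by rw [(hgrid y₀ hy₀).2]; exact one_pos) hdz hε₀ hb₀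
        ((hR0 z hz).trans (le_max_left _ _)) (le_max_right _ _)).2
      linarith
  -- `W` is nonexpansive for the Funk metric
  have hLW : ∀ u ∈ interior C, ∀ u' ∈ interior C, W u ≤ W u' + funk C u u' := by
    intro u hu u' hu'
    obtain ⟨y', hy', hEq⟩ := Xh.exists_mem_eq_inf' hXhne (fun y => v y + funk C u' y)
    obtain ⟨ε', hε', hb'⟩ := ball_of_interior hu'
    obtain ⟨εy, hεy, hby⟩ := ball_of_interior (hgrid y' hy').1
    have htri : funk C u y' ≤ funk C u u' + funk C u' y' :=
      funk_triangle hCcone hCadd hdual (hdpos _ hu) (hdpos _ hu')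
        (by rw [(hgrid y' hy').2]; exact one_pos)
        (fset_nonempty hCcone hε' hb' u) (fset_nonempty hCcone hεy hby u')
    have h1 : W u ≤ v y' + funk C u y' := Finset.inf'_le _ hy'
    have h2 : W u' = v y' + funk C u' y' := hEq
    linarith
  -- `W` is log-homogeneous
  have hWscale : ∀ x ∈ interior C, ∀ c : ℝ, 0 < c → W (c • x) = Real.log c + W x := by
    intro x hx c hc
    have hcong : ∀ y ∈ Xh, v y + funk C (c • x) y = Real.log c + (v y + funk C x y) := by
      intro y hy
      obtain ⟨ε, hε, hb⟩ := ball_of_interior (hgrid y hy).1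
      rw [funk_smul hCcone hdual (hdpos _ hx) (by rw [(hgrid y hy).2]; exact one_pos)
        (fset_nonempty hCcone hε hb x) hc]
      ring
    calc W (c • x) = Xh.inf' hXhne (fun y => Real.log c + (v y + funk C x y)) :=
          Finset.inf'_congr hXhne rfl hcong
      _ = Real.log c + W x := inf'_const_add Xh hXhne _ _
  -- `W` agrees with `v` on the grid
  have hWgrid : ∀ y ∈ Xh, W y = v y := by
    intro y hy
    have h0 : funk C y y = 0 := funk_self hCcone hdual
      (interior_subset (hgrid y hy).1) (by rw [(hgrid y hy).2]; exact one_pos)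
    apply le_antisymm
    · have h1 : W y ≤ v y + funk C y y := Finset.inf'_le _ hy
      rw [h0] at h1
      linarith
    · apply Finset.le_inf'
      intro y' hy'
      have := hvLip y hy y' hy'
      linarith
  -- the Shapley operator applied to `W` realizes the discrete eigen-relation on the grid
  have hSWgrid : ∀ y ∈ Xh, shapley A B T W y = l + v y := by
    intro y hy
    have hyi := (hgrid y hy).1
    have hkey : ∀ a : A, ∀ b : B, W (T a b y) =
        Real.log (dotProduct (T a b y) estar) +
          Ih C Xh hXhne v ((dotProduct (T a b y) estar)⁻¹ • T a b y) := by
      intro a b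
      have hu : T a b y ∈ interior C := hTmaps a a.2 b b.2 y hyi
      have hdu : 0 < dotProduct (T a b y) estar := hdpos _ hu
      have hxu : (dotProduct (T a b y) estar)⁻¹ • T a b y ∈ interior C :=
        smul_mem_interior hCcone hu (by positivity)
      have h2 : ∀ y' ∈ Xh, v y' + funk C (T a b y) y' =
          Real.log (dotProduct (T a b y) estar) +
            (v y' + funk C ((dotProduct (T a b y) estar)⁻¹ • T a b y) y') := by
        intro y' hy'
        obtain ⟨ε, hε, hb⟩ := ball_of_interior (hgrid y' hy').1
        have h3 := funk_smul hCcone hdual (hdpos _ hxu)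
          (by rw [(hgrid y' hy').2]; exact one_pos)
          (fset_nonempty hCcone hε hb ((dotProduct (T a b y) estar)⁻¹ • T a b y))
          hdu
        rw [smul_inv_smul₀ (ne_of_gt hdu)] at h3
        rw [h3]
        ring
      show Xh.inf' hXhne (fun y' => v y' + funk C (T a b y) y') = _
      rw [Finset.inf'_congr hXhne rfl h2, inf'_const_add Xh hXhne]
      rfl
    have hSWy : shapley A B T W y = Fop A B T estar (Ih C Xh hXhne v) y := by
      unfold shapley Fop
      exact iInf_congr fun a => iSup_congr fun b => hkey a b
    rw [hSWy, heig y hy]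
  -- one-step estimates on the cross-section
  have hAX : ∀ x ∈ crossSec K estar, shapley A B T W x ≤ l + W x := by
    intro x hx
    have hxi := hXsub hx
    obtain ⟨m1, M1, hmM1⟩ := hsingle W hPW x hxi
    have hWx : l + W x = Xh.inf' hXhne (fun y => l + (v y + funk C x y)) :=
      (inf'_const_add Xh hXhne _ _).symm
    rw [hWx]
    apply Finset.le_inf'
    intro y hy
    have hyi := (hgrid y hy).1
    obtain ⟨m2, M2, hmM2⟩ := hsingle W hPW y hyi
    have h1 : shapley A B T W x ≤ shapley A B T W y + funk C x y :=
      S_lip A B T hTmaps hTnexp hLW hxi hyi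
        (fun a ha b hb => (hmM1 a ha b hb).1) hmM2
    rw [hSWgrid y hy] at h1
    linarith
  have hBX : ∀ x ∈ crossSec K estar, l - h + W x ≤ shapley A B T W x := by
    intro x hx
    have hxi := hXsub hx
    obtain ⟨y, hy, hcov⟩ := hcover x hx
    have hyi := (hgrid y hy).1
    obtain ⟨m1, M1, hmM1⟩ := hsingle W hPW x hxi
    obtain ⟨m2, M2, hmM2⟩ := hsingle W hPW y hyi
    have h1 : shapley A B T W y ≤ shapley A B T W x + funk C y x :=
      S_lip A B T hTmaps hTnexp hLW hyi hxi
        (fun a ha b hb => (hmM2 a ha b hb).1) hmM1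
    rw [hSWgrid y hy] at h1
    have h2 : W x ≤ v y + funk C x y := Finset.inf'_le _ hy
    linarith
  -- extension to the invariant cone by homogeneity
  have hcone_pt : ∀ z ∈ K, z ∈ interior C →
      ((dotProduct z estar)⁻¹ • z ∈ crossSec K estar ∧
        dotProduct z estar • ((dotProduct z estar)⁻¹ • z) = z) := by
    intro z hzK hzi
    have hdz := hdpos z hzi
    refine ⟨⟨hKcone z hzK _ (by positivity), ?_⟩, smul_inv_smul₀ (ne_of_gt hdz) z⟩
    rw [smul_dotProduct, smul_eq_mul]
    field_simp
  have hSWscale : ∀ z ∈ K, z ∈ interior C →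
      (shapley A B T W z =
          Real.log (dotProduct z estar) +
            shapley A B T W ((dotProduct z estar)⁻¹ • z) ∧
        W z = Real.log (dotProduct z estar) +
            W ((dotProduct z estar)⁻¹ • z)) := by
    intro z hzK hzi
    have hdz := hdpos z hzi
    obtain ⟨hxX, hzx⟩ := hcone_pt z hzK hzi
    have hxi := hXsub hxX
    constructor
    · have hTz : ∀ a : A, ∀ b : B, W (T a b z) =
          Real.log (dotProduct z estar) +
            W (T a b ((dotProduct z estar)⁻¹ • z)) := by
        intro a b
        conv_lhs => rw [← hzx]
        rw [hThom a a.2 b b.2 _ hxi _ hdz]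
        exact hWscale _ (hTmaps a a.2 b b.2 _ hxi) _ hdz
      have heq1 : shapley A B T W z =
          shapley A B T (fun u => Real.log (dotProduct z estar) + W u)
            ((dotProduct z estar)⁻¹ • z) :=
        iInf_congr fun a => iSup_congr fun b => hTz a b
      rw [heq1]
      obtain ⟨m, M, hmM⟩ := hsingle W hPW _ hxi
      exact S_const_add A B T _ hmM
    · conv_lhs => rw [← hzx]
      exact hWscale _ hxi _ hdz
  have hA' : ∀ z ∈ K, z ∈ interior C → shapley A B T W z ≤ l + W z := by
    intro z hzK hzi
    obtain ⟨hS, hW⟩ := hSWscale z hzK hzi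
    obtain ⟨hxX, -⟩ := hcone_pt z hzK hzi
    rw [hS, hW]
    linarith [hAX _ hxX]
  have hB' : ∀ z ∈ K, z ∈ interior C → l - h + W z ≤ shapley A B T W z := by
    intro z hzK hzi
    obtain ⟨hS, hW⟩ := hSWscale z hzK hzi
    obtain ⟨hxX, -⟩ := hcone_pt z hzK hzi
    rw [hS, hW]
    linarith [hBX _ hxX]
  -- the initial payoff function
  have hPf : Pbdd C (fun y => funk C y xb) := Pbdd_funk hCcone hdual hdpos hxb
  have hdxb := hdpos xb hxb
  obtain ⟨εb, hεb, hbb⟩ := ball_of_interior hxb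
  have hLf : ∀ u ∈ interior C, ∀ u' ∈ interior C,
      funk C u xb ≤ funk C u' xb + funk C u u' := by
    intro u hu u' hu'
    obtain ⟨ε', hε', hb'⟩ := ball_of_interior hu'
    have htri := funk_triangle hCcone hCadd hdual (hdpos _ hu) (hdpos _ hu') hdxb
      (fset_nonempty hCcone hε' hb' u) (fset_nonempty hCcone hεb hbb u')
    linarith
  -- comparison of `f` and `W` on the cross-section
  have hXhne' := hXhne
  obtain ⟨y₀, hy₀⟩ := hXhne'
  obtain ⟨ε₀, hε₀, hb₀⟩ := ball_of_interior (hgrid y₀ hy₀).1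
  set mHi : ℝ := Real.log (RX / εb + 1) - Xh.inf' hXhne v with hmHidef
  set mLo : ℝ := -Real.log (dotProduct xb estar) -
    (v y₀ + Real.log (RX / ε₀ + 1)) with hmLodef
  have hfWX : ∀ x ∈ crossSec K estar,
      funk C x xb ≤ W x + mHi ∧ W x + mLo ≤ funk C x xb := by
    intro x hx
    have hxi := hXsub hx
    have hdx := hdpos _ hxi
    have hbd := funk_bound hCcone hdual hdxb hdx hεb hbb (hRXb x hx) hRX0
    rw [hx.2] at hbd
    have hlog : Real.log (1 / dotProduct xb estar) =
        -Real.log (dotProduct xb estar) := by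
      rw [one_div, Real.log_inv]
    rw [hlog] at hbd
    have hWlb : Xh.inf' hXhne v ≤ W x := by
      apply Finset.le_inf'
      intro y hy
      obtain ⟨ε, hε, hb⟩ := ball_of_interior (hgrid y hy).1
      have hfk := (funk_bound hCcone hdual (by rw [(hgrid y hy).2]; exact one_pos) hdx hε hb
        (hRXb x hx) hRX0).1
      rw [(hgrid y hy).2, hx.2, div_one, Real.log_one] at hfk
      have := Finset.inf'_le v hy
      linarith
    have hWub : W x ≤ v y₀ + Real.log (RX / ε₀ + 1) := by
      have h1 : W x ≤ v y₀ + funk C x y₀ := Finset.inf'_le _ hy₀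
      have hfk := (funk_bound hCcone hdual (by rw [(hgrid y₀ hy₀).2]; exact one_pos) hdx hε₀ hb₀
        (hRXb x hx) hRX0).2
      linarith
    exact ⟨by simp only [hmHidef]; linarith [hbd.2],
      by simp only [hmLodef]; linarith [hbd.1]⟩
  -- comparison on the whole invariant cone, by homogeneity
  have hfWK : ∀ z ∈ K, z ∈ interior C →
      funk C z xb ≤ W z + mHi ∧ W z + mLo ≤ funk C z xb := by
    intro z hzK hzi
    have hdz := hdpos z hzi
    obtain ⟨hxX, hzx⟩ := hcone_pt z hzK hzi
    have hxi := hXsub hxX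
    have hfz : funk C z xb = Real.log (dotProduct z estar) +
        funk C ((dotProduct z estar)⁻¹ • z) xb := by
      conv_lhs => rw [← hzx]
      exact funk_smul hCcone hdual (hdpos _ hxi) hdxb
        (fset_nonempty hCcone hεb hbb _) hdz
    have hWz := (hSWscale z hzK hzi).2
    obtain ⟨h1, h2⟩ := hfWX _ hxX
    rw [hfz, hWz]
    constructor <;> linarith
  -- the main induction on the number of game stages
  have hmain : ∀ k : ℕ, Pbdd C ((shapley A B T)^[k] (fun y => funk C y xb)) ∧
      (∀ u ∈ interior C, ∀ u' ∈ interior C,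
        (shapley A B T)^[k] (fun y => funk C y xb) u ≤
          (shapley A B T)^[k] (fun y => funk C y xb) u' + funk C u u') ∧
      (∀ z ∈ K, z ∈ interior C →
        (shapley A B T)^[k] (fun y => funk C y xb) z ≤ k * l + (W z + mHi) ∧
          k * (l - h) + (W z + mLo) ≤ (shapley A B T)^[k] (fun y => funk C y xb) z) := by
    intro k
    induction k with
    | zero =>
      simp only [Function.iterate_zero, id_eq, Nat.cast_zero, zero_mul, zero_add]
      exact ⟨hPf, fun u hu u' hu' => hLf u hu u' hu', fun z hzK hzi => hfWK z hzK hzi⟩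
    | succ k ih =>
      obtain ⟨ihP, ihL, ihB⟩ := ih
      have hstep : ∀ u, (shapley A B T)^[k+1] (fun y => funk C y xb) u =
          shapley A B T ((shapley A B T)^[k] (fun y => funk C y xb)) u :=
        fun u => by rw [Function.iterate_succ_apply']
      have hP' : Pbdd C ((shapley A B T)^[k+1] (fun y => funk C y xb)) := by
        have := Pbdd_shapley A B T hTmaps hcomp ihP
        intro Kc hsub hcpt
        obtain ⟨m, M, hmM⟩ := this Kc hsub hcpt
        exact ⟨m, M, fun z hz => by rw [hstep z]; exact hmM z hz⟩
      have hL' : ∀ u ∈ interior C, ∀ u' ∈ interior C,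
          (shapley A B T)^[k+1] (fun y => funk C y xb) u ≤
            (shapley A B T)^[k+1] (fun y => funk C y xb) u' + funk C u u' := by
        intro u hu u' hu'
        rw [hstep u, hstep u']
        obtain ⟨m1, M1, hmM1⟩ := hsingle _ ihP u hu
        obtain ⟨m2, M2, hmM2⟩ := hsingle _ ihP u' hu'
        exact S_lip A B T hTmaps hTnexp ihL hu hu'
          (fun a ha b hb => (hmM1 a ha b hb).1) hmM2
      refine ⟨hP', hL', fun z hzK hzi => ?_⟩
      obtain ⟨m1, M1, hmM1⟩ := hsingle _ ihP z hzi
      obtain ⟨m2, M2, hmM2⟩ := hsingle W hPW z hzi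
      have himg : ∀ a ∈ A, ∀ b ∈ B, T a b z ∈ K ∧ T a b z ∈ interior C :=
        fun a ha b hb => ⟨hTK a ha b hb z hzK, hTmaps a ha b hb z hzi⟩
      constructor
      · rw [hstep z]
        have hmono : shapley A B T ((shapley A B T)^[k] (fun y => funk C y xb)) z ≤
            shapley A B T (fun u => (k * l + mHi) + W u) z := by
          apply S_mono A B T (fun a ha b hb => (hmM1 a ha b hb).1)
            (M := (k * l + mHi) + M2) (fun a ha b hb => by
              have := (hmM2 a ha b hb).2
              linarith)
            (fun a ha b hb => by
              have hb1 := (ihB _ (himg a ha b hb).1 (himg a ha b hb).2).1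
              linarith)
        have hconst : shapley A B T (fun u => (k * l + mHi) + W u) z =
            (k * l + mHi) + shapley A B T W z := S_const_add A B T _ hmM2
        have hlast := hA' z hzK hzi
        rw [hconst] at hmono
        push_cast
        linarith
      · rw [hstep z]
        have hmono : shapley A B T (fun u => (k * (l - h) + mLo) + W u) z ≤
            shapley A B T ((shapley A B T)^[k] (fun y => funk C y xb)) z := by
          apply S_mono A B T (m := (k * (l - h) + mLo) + m2)
            (fun a ha b hb => by
              have := (hmM2 a ha b hb).1
              linarith)
            (fun a ha b hb => (hmM1 a ha b hb).2)
            (fun a ha b hb => by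
              have hb1 := (ihB _ (himg a ha b hb).1 (himg a ha b hb).2).2
              linarith)
        have hconst : shapley A B T (fun u => (k * (l - h) + mLo) + W u) z =
            (k * (l - h) + mLo) + shapley A B T W z := S_const_add A B T _ hmM2
        have hlast := hB' z hzK hzi
        rw [hconst] at hmono
        push_cast
        linarith
  -- transfer from `x0` to the basepoint `xb` and conclude
  have hup : ∀ k : ℕ, (shapley A B T)^[k] (fun y => funk C y xb) xb ≤
      k * l + (W x0 + mHi + funk C xb x0) := by
    intro k
    obtain ⟨hPk, hLk, hBk⟩ := hmain k
    have h1 := hLk xb hxb x0 hx0i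
    have h2 := (hBk x0 hx0K hx0i).1
    linarith
  have hdn : ∀ k : ℕ, k * (l - h) + (W x0 + mLo - funk C x0 xb) ≤
      (shapley A B T)^[k] (fun y => funk C y xb) xb := by
    intro k
    obtain ⟨hPk, hLk, hBk⟩ := hmain k
    have h1 := hLk x0 hx0i xb hxb
    have h2 := (hBk x0 hx0K hx0i).2
    linarith
  constructor
  · have h0 := tendsto_const_div_atTop_nhds_zero_nat (W x0 + mLo - funk C x0 xb)
    have htend : Tendsto (fun k : ℕ => (l - h) + (W x0 + mLo - funk C x0 xb) / k)
        atTop (nhds (l - h)) := by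
      have h1 := (tendsto_const_nhds (x := l - h) (f := (atTop : Filter ℕ))).add h0
      simpa using h1
    refine le_of_tendsto_of_tendsto htend hρ ?_
    filter_upwards [eventually_ge_atTop 1] with k hk
    have hkpos : (0:ℝ) < (k:ℝ) := by
      have : 0 < k := hk
      exact_mod_cast this
    show (l - h) + (W x0 + mLo - funk C x0 xb) / k ≤
      (shapley A B T)^[k] (fun y => funk C y xb) xb / (k : ℝ)
    rw [le_div_iff₀ hkpos]
    have hexp : ((l - h) + (W x0 + mLo - funk C x0 xb) / k) * k =
        k * (l - h) + (W x0 + mLo - funk C x0 xb) := by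
      field_simp
    rw [hexp]
    exact hdn k
  · have h0 := tendsto_const_div_atTop_nhds_zero_nat (W x0 + mHi + funk C xb x0)
    have htend : Tendsto (fun k : ℕ => l + (W x0 + mHi + funk C xb x0) / k)
        atTop (nhds l) := by
      have h1 := (tendsto_const_nhds (x := l) (f := (atTop : Filter ℕ))).add h0
      simpa using h1
    refine le_of_tendsto_of_tendsto hρ htend ?_
    filter_upwards [eventually_ge_atTop 1] with k hk
    have hkpos : (0:ℝ) < (k:ℝ) := by
      have : 0 < k := hk
      exact_mod_cast this
    show (shapley A B T)^[k] (fun y => funk C y xb) xb / (k : ℝ) ≤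
      l + (W x0 + mHi + funk C xb x0) / k
    rw [div_le_iff₀ hkpos]
    have hexp : (l + (W x0 + mHi + funk C xb x0) / k) * k =
        k * l + (W x0 + mHi + funk C xb x0) := by
      field_simp
    rw [hexp]
    exact hup k
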